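/- Let X^(k), k = 1,...,K, be independent with X^(k) ∼ Beta(θ/K + (k−1)/K, β/K). Then the geometric mean (∏_{k=1}^K X^(k))^{1/K} has a Beta(θ, β) distribution. -/

import Mathlib

open MeasureTheory ProbabilityTheory
open scoped NNReal ENNReal

/-- The beta function `B(a, b) = Γ(a)Γ(b)/Γ(a+b)`. -/
noncomputable def betaFun (a b : ℝ) : ℝ := Real.Gamma a * Real.Gamma b / Real.Gamma (a + b)

/-- The Beta distribution with parameters `a, b > 0`, defined by its density
`x^(a-1) (1-x)^(b-1) / B(a,b)` on `(0, 1)`. -/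
noncomputable def betaMeasure' (a b : ℝ) : Measure ℝ :=
  volume.withDensity (fun x =>
    ENNReal.ofReal (if x ∈ Set.Ioo (0 : ℝ) 1
      then x ^ (a - 1) * (1 - x) ^ (b - 1) / betaFun a b else 0))

/-! ### Auxiliary facts about the Beta function -/

lemma betaFun_pos {a b : ℝ} (ha : 0 < a) (hb : 0 < b) : 0 < betaFun a b :=
  div_pos (mul_pos (Real.Gamma_pos_of_pos ha) (Real.Gamma_pos_of_pos hb))
    (Real.Gamma_pos_of_pos (by linarith))

lemma beta_integral_real {a b : ℝ} (ha : 0 < a) (hb : 0 < b) :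
    ∫ x in (0:ℝ)..1, x ^ (a - 1) * (1 - x) ^ (b - 1) = betaFun a b := by
  have key := Complex.Gamma_mul_Gamma_eq_betaIntegral (s := (a:ℂ)) (t := (b:ℂ))
    (by simpa using ha) (by simpa using hb)
  have hint : Complex.betaIntegral (a:ℂ) (b:ℂ)
      = ((∫ x in (0:ℝ)..1, x ^ (a - 1) * (1 - x) ^ (b - 1) : ℝ) : ℂ) := by
    rw [Complex.betaIntegral, ← intervalIntegral.integral_ofReal]
    refine intervalIntegral.integral_congr (fun x hx => ?_)
    rw [Set.uIcc_of_le (by norm_num : (0:ℝ) ≤ 1)] at hx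
    have e1 : ((a:ℂ) - 1) = ((a - 1 : ℝ) : ℂ) := by push_cast; ring
    have e2 : ((b:ℂ) - 1) = ((b - 1 : ℝ) : ℂ) := by push_cast; ring
    have e3 : (1 - (x:ℂ)) = ((1 - x : ℝ) : ℂ) := by push_cast; ring
    rw [e1, e2, e3, ← Complex.ofReal_cpow hx.1 (a - 1),
      ← Complex.ofReal_cpow (by linarith [hx.2] : (0:ℝ) ≤ 1 - x) (b - 1)]
    push_cast
    ring
  rw [hint] at key
  rw [← Complex.ofReal_add, Complex.Gamma_ofReal, Complex.Gamma_ofReal, Complex.Gamma_ofReal,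
    ← Complex.ofReal_mul, ← Complex.ofReal_mul] at key
  have := Complex.ofReal_injective key
  have hGab : Real.Gamma (a + b) ≠ 0 := (Real.Gamma_pos_of_pos (by linarith)).ne'
  rw [betaFun, eq_div_iff hGab, this]; ring

lemma beta_integrableOn {a b : ℝ} (ha : 0 < a) (hb : 0 < b) :
    IntegrableOn (fun x : ℝ => x ^ (a - 1) * (1 - x) ^ (b - 1)) (Set.Ioo 0 1) volume := by
  have h := Complex.betaIntegral_convergent (u := (a:ℂ)) (v := (b:ℂ))
    (by simpa using ha) (by simpa using hb)
  have h1 : IntegrableOn (fun x : ℝ => (x:ℂ) ^ ((a:ℂ) - 1) * (1 - (x:ℂ)) ^ ((b:ℂ) - 1))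
      (Set.Ioc (0:ℝ) 1) volume := by
    exact h.1
  have h2 : IntegrableOn (fun x : ℝ => Complex.re ((x:ℂ) ^ ((a:ℂ) - 1) * (1 - (x:ℂ)) ^ ((b:ℂ) - 1)))
      (Set.Ioo (0:ℝ) 1) volume := (h1.mono_set Set.Ioo_subset_Ioc_self).re
  refine IntegrableOn.congr_fun h2 (fun x hx => ?_) measurableSet_Ioo
  have e1 : ((a:ℂ) - 1) = ((a - 1 : ℝ) : ℂ) := by push_cast; ring
  have e2 : ((b:ℂ) - 1) = ((b - 1 : ℝ) : ℂ) := by push_cast; ring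
  have e3 : (1 - (x:ℂ)) = ((1 - x : ℝ) : ℂ) := by push_cast; ring
  simp only [e1, e2, e3, ← Complex.ofReal_cpow hx.1.le (a - 1),
    ← Complex.ofReal_cpow (by linarith [hx.2] : (0:ℝ) ≤ 1 - x) (b - 1),
    ← Complex.ofReal_mul, Complex.ofReal_re]

lemma beta_integralOn {a b : ℝ} (ha : 0 < a) (hb : 0 < b) :
    ∫ x in Set.Ioo (0:ℝ) 1, x ^ (a - 1) * (1 - x) ^ (b - 1) = betaFun a b := by
  rw [← beta_integral_real ha hb, intervalIntegral.integral_of_le (by norm_num : (0:ℝ) ≤ 1),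
    MeasureTheory.integral_Ioc_eq_integral_Ioo]

/-! ### The density -/

noncomputable def betaDens (a b : ℝ) (x : ℝ) : ℝ :=
  if x ∈ Set.Ioo (0 : ℝ) 1 then x ^ (a - 1) * (1 - x) ^ (b - 1) / betaFun a b else 0

lemma betaMeasure_eq (a b : ℝ) :
    betaMeasure' a b = volume.withDensity (fun x => ENNReal.ofReal (betaDens a b x)) := rfl

lemma betaDens_measurable (a b : ℝ) : Measurable (betaDens a b) := by
  unfold betaDens
  refine Measurable.ite measurableSet_Ioo ?_ measurable_const
  fun_prop

lemma betaDens_eq_indicator (a b : ℝ) : betaDens a b =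
    Set.indicator (Set.Ioo (0:ℝ) 1) (fun x => x ^ (a - 1) * (1 - x) ^ (b - 1) / betaFun a b) := by
  funext x
  simp [betaDens, Set.indicator_apply]

lemma betaDens_integrable {a b : ℝ} (ha : 0 < a) (hb : 0 < b) :
    Integrable (betaDens a b) volume := by
  rw [betaDens_eq_indicator]
  rw [MeasureTheory.integrable_indicator_iff measurableSet_Ioo]
  exact (beta_integrableOn ha hb).div_const _

lemma betaDens_nonneg {a b : ℝ} (ha : 0 < a) (hb : 0 < b) (x : ℝ) : 0 ≤ betaDens a b x := by
  unfold betaDens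
  split_ifs with h
  · rcases h with ⟨h1, h2⟩
    have hB := betaFun_pos ha hb
    have r1 := Real.rpow_nonneg h1.le (a - 1)
    have r2 := Real.rpow_nonneg (by linarith : (0:ℝ) ≤ 1 - x) (b - 1)
    positivity
  · exact le_refl _

lemma betaDens_integral {a b : ℝ} (ha : 0 < a) (hb : 0 < b) :
    ∫ x, betaDens a b x = 1 := by
  rw [betaDens_eq_indicator, MeasureTheory.integral_indicator measurableSet_Ioo]
  rw [integral_div, beta_integralOn ha hb, div_self (betaFun_pos ha hb).ne']

lemma betaMeasure_isProbability {a b : ℝ} (ha : 0 < a) (hb : 0 < b) :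
    IsProbabilityMeasure (betaMeasure' a b) := by
  constructor
  rw [betaMeasure_eq, withDensity_apply _ MeasurableSet.univ, Measure.restrict_univ,
    ← MeasureTheory.ofReal_integral_eq_lintegral_ofReal (betaDens_integrable ha hb)
      (Filter.Eventually.of_forall (betaDens_nonneg ha hb)),
    betaDens_integral ha hb, ENNReal.ofReal_one]

lemma betaMeasure_compl_Ioo (a b : ℝ) : betaMeasure' a b (Set.Ioo 0 1)ᶜ = 0 := by
  rw [betaMeasure_eq, withDensity_apply _ measurableSet_Ioo.compl]
  have : ∀ᵐ x ∂(volume.restrict (Set.Ioo (0:ℝ) 1)ᶜ), ENNReal.ofReal (betaDens a b x) = 0 := by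
    refine (ae_restrict_iff' measurableSet_Ioo.compl).2 (Filter.Eventually.of_forall ?_)
    intro x hx
    simp only [betaDens]
    rw [if_neg ((Set.mem_compl_iff _ _).mp hx)]
    simp
  rw [lintegral_congr_ae this, lintegral_zero]

lemma betaMeasure_compl_Icc (a b : ℝ) : betaMeasure' a b (Set.Icc 0 1)ᶜ = 0 :=
  measure_mono_null (Set.compl_subset_compl.2 Set.Ioo_subset_Icc_self) (betaMeasure_compl_Ioo a b)

/-! ### Integrals against the Beta measure -/

lemma betaMeasure_integral {a b : ℝ} (ha : 0 < a) (hb : 0 < b) (f : ℝ → ℝ) (hf : Measurable f) :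
    ∫ x, f x ∂(betaMeasure' a b)
      = (∫ x in Set.Ioo (0:ℝ) 1, x ^ (a - 1) * (1 - x) ^ (b - 1) * f x) / betaFun a b := by
  have hB := betaFun_pos ha hb
  have hd : Measurable (fun x => Real.toNNReal (betaDens a b x)) :=
    (betaDens_measurable a b).real_toNNReal
  have h0 : betaMeasure' a b
      = volume.withDensity (fun x => ((betaDens a b x).toNNReal : ENNReal)) := rfl
  rw [h0, integral_withDensity_eq_integral_smul hd f]
  have : (fun x => Real.toNNReal (betaDens a b x) • f x)
      = Set.indicator (Set.Ioo (0:ℝ) 1)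
          (fun x => (x ^ (a - 1) * (1 - x) ^ (b - 1) * f x) / betaFun a b) := by
    funext x
    by_cases hx : x ∈ Set.Ioo (0:ℝ) 1
    · rw [Set.indicator_of_mem hx]
      have hdx : betaDens a b x = x ^ (a - 1) * (1 - x) ^ (b - 1) / betaFun a b := by
        simp [betaDens, hx]
      rw [NNReal.smul_def, Real.coe_toNNReal _ (betaDens_nonneg ha hb x), hdx, smul_eq_mul]
      ring
    · rw [Set.indicator_of_notMem hx]
      have hdx : betaDens a b x = 0 := by simp [betaDens, hx]
      simp [hdx]
  rw [this, MeasureTheory.integral_indicator measurableSet_Ioo, integral_div]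

lemma betaMeasure_rpow {a b : ℝ} (ha : 0 < a) (hb : 0 < b) {r : ℝ} (hr : 0 ≤ r) :
    ∫ x, x ^ r ∂(betaMeasure' a b) = betaFun (a + r) b / betaFun a b := by
  rw [betaMeasure_integral ha hb (fun x => x ^ r) (by fun_prop)]
  congr 1
  rw [← beta_integralOn (by linarith : 0 < a + r) hb]
  refine setIntegral_congr_fun measurableSet_Ioo (fun x hx => ?_)
  have hx0 : (0:ℝ) < x := hx.1
  rw [show a + r - 1 = (a - 1) + r by ring, Real.rpow_add hx0]
  ring

lemma betaMeasure_pow_nat {a b : ℝ} (ha : 0 < a) (hb : 0 < b) (n : ℕ) :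
    ∫ x, x ^ n ∂(betaMeasure' a b) = betaFun (a + n) b / betaFun a b := by
  rw [← betaMeasure_rpow ha hb (Nat.cast_nonneg n)]
  rw [betaMeasure_integral ha hb (fun x => x ^ n) (by fun_prop),
    betaMeasure_integral ha hb (fun x => x ^ (n:ℝ)) (by fun_prop)]
  congr 1
  refine setIntegral_congr_fun measurableSet_Ioo (fun x hx => ?_)
  rw [← Real.rpow_natCast x n]

open Finset in
section
open Finset

lemma Gamma_add_nat {c : ℝ} (hc : 0 < c) (n : ℕ) :
    Real.Gamma (c + n) = (∏ j ∈ range n, (c + j)) * Real.Gamma c := by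
  induction n with
  | zero => simp
  | succ n ih =>
    have h1 : c + (n + 1 : ℕ) = (c + n) + 1 := by push_cast; ring
    rw [h1, Real.Gamma_add_one (by positivity : (c + (n:ℝ)) ≠ 0), ih, prod_range_succ]
    ring

lemma Gamma_prod_telescope {c : ℝ} (hc : 0 < c) {K : ℕ} (hK : 0 < K) (n : ℕ) :
    ∏ k ∈ range K, Real.Gamma ((c + k + n) / K)
      = (∏ j ∈ range n, ((c + j) / K)) * ∏ k ∈ range K, Real.Gamma ((c + k) / K) := by
  have hK' : (0:ℝ) < K := by exact_mod_cast hK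
  induction n with
  | zero => simp
  | succ n ih =>
    set f : ℕ → ℝ := fun k => Real.Gamma ((c + n + k) / K) with hf
    have hstep : ∏ k ∈ range K, Real.Gamma ((c + k + (n+1:ℕ)) / K)
        = ((c + n) / K) * ∏ k ∈ range K, Real.Gamma ((c + k + n) / K) := by
      have e : ∀ k ∈ range K, Real.Gamma ((c + k + (n+1:ℕ)) / K) = f (k + 1) := by
        intro k _
        simp only [hf]
        congr 1
        push_cast
        ring
      have e' : ∀ k ∈ range K, Real.Gamma ((c + k + n) / K) = f k := by
        intro k _
        simp only [hf]
        congr 1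
        push_cast
        ring
      rw [prod_congr rfl e, prod_congr rfl e']
      have h1 : ∏ k ∈ range (K + 1), f k = (∏ k ∈ range K, f (k + 1)) * f 0 :=
        prod_range_succ' f K
      have h2 : ∏ k ∈ range (K + 1), f k = (∏ k ∈ range K, f k) * f K := prod_range_succ f K
      have hfK : f K = ((c + n) / K) * f 0 := by
        have : (c + n + K) / K = (c + n) / K + 1 := by field_simp
        simp only [hf, this]
        rw [Real.Gamma_add_one (by positivity)]
        simp
      have hf0 : f 0 ≠ 0 := by
        simp only [hf]
        push_cast
        exact (Real.Gamma_pos_of_pos (by positivity)).ne'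
      have h3 := h1.symm.trans h2
      rw [hfK] at h3
      have key : ∏ k ∈ range K, f (k + 1) = ((c + n) / K) * ∏ k ∈ range K, f k := by
        apply mul_right_cancel₀ hf0
        rw [h3]
        ring
      rw [key]
    rw [hstep, ih, prod_range_succ]
    ring

lemma betaFun_ratio {c b : ℝ} (hc : 0 < c) (hb : 0 < b) (n : ℕ) :
    betaFun (c + n) b / betaFun c b
      = (∏ j ∈ range n, (c + j)) / (∏ j ∈ range n, (c + b + j)) := by
  have h1 := Gamma_add_nat hc n
  have h2 := Gamma_add_nat (by linarith : 0 < c + b) n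
  have e : c + (n:ℝ) + b = c + b + n := by ring
  unfold betaFun
  rw [e, h1, h2]
  have g1 : Real.Gamma c > 0 := Real.Gamma_pos_of_pos hc
  have g2 : Real.Gamma b > 0 := Real.Gamma_pos_of_pos hb
  have g3 : Real.Gamma (c + b) > 0 := Real.Gamma_pos_of_pos (by linarith)
  have p2 : (∏ j ∈ range n, (c + b + (j:ℝ))) > 0 :=
    prod_pos (fun j _ => by positivity)
  field_simp

lemma moment_prod {θ β : ℝ} (hθ : 0 < θ) (hβ : 0 < β) {K : ℕ} (hK : 0 < K) (n : ℕ) :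
    ∏ k ∈ range K, (betaFun ((θ + k + n) / K) (β / K) / betaFun ((θ + k) / K) (β / K))
      = betaFun (θ + n) β / betaFun θ β := by
  have hK' : (0:ℝ) < K := by exact_mod_cast hK
  have factor : ∀ k ∈ range K,
      betaFun ((θ + k + n) / K) (β / K) / betaFun ((θ + k) / K) (β / K)
        = (Real.Gamma ((θ + k + n) / K) * Real.Gamma ((θ + β + k) / K))
          / (Real.Gamma ((θ + k) / K) * Real.Gamma ((θ + β + k + n) / K)) := by
    intro k _
    unfold betaFun
    rw [← add_div, ← add_div,
      show θ + (k:ℝ) + (n:ℝ) + β = θ + β + k + n by ring,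
      show θ + (k:ℝ) + β = θ + β + k by ring]
    have g1 : 0 < Real.Gamma ((θ + k + n) / K) := Real.Gamma_pos_of_pos (by positivity)
    have g2 : 0 < Real.Gamma ((θ + β + k) / K) := Real.Gamma_pos_of_pos (by positivity)
    have g3 : 0 < Real.Gamma ((θ + k) / K) := Real.Gamma_pos_of_pos (by positivity)
    have g4 : 0 < Real.Gamma ((θ + β + k + n) / K) := Real.Gamma_pos_of_pos (by positivity)
    have g5 : 0 < Real.Gamma (β / K) := Real.Gamma_pos_of_pos (by positivity)
    field_simp
  rw [prod_congr rfl factor, prod_div_distrib, prod_mul_distrib, prod_mul_distrib,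
    Gamma_prod_telescope hθ hK n, Gamma_prod_telescope (by linarith : (0:ℝ) < θ + β) hK n,
    betaFun_ratio hθ hβ n]
  have hA0 : 0 < ∏ k ∈ range K, Real.Gamma ((θ + k) / K) :=
    prod_pos (fun k _ => Real.Gamma_pos_of_pos (by positivity))
  have hC0 : 0 < ∏ k ∈ range K, Real.Gamma ((θ + β + k) / K) :=
    prod_pos (fun k _ => Real.Gamma_pos_of_pos (by positivity))
  have hP1 : ∏ j ∈ range n, ((θ + j) / K) = (∏ j ∈ range n, (θ + (j:ℝ))) / K ^ n := by
    rw [prod_div_distrib, prod_const, card_range]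
  have hP2 : ∏ j ∈ range n, ((θ + β + j) / K) = (∏ j ∈ range n, (θ + β + (j:ℝ))) / K ^ n := by
    rw [prod_div_distrib, prod_const, card_range]
  have hq1 : 0 < ∏ j ∈ range n, (θ + (j:ℝ)) := prod_pos (fun j _ => by positivity)
  have hq2 : 0 < ∏ j ∈ range n, (θ + β + (j:ℝ)) := prod_pos (fun j _ => by positivity)
  rw [hP1, hP2]
  have hKn : (0:ℝ) < (K:ℝ) ^ n := by positivity
  field_simp

end


lemma integrable_of_support_Icc {ν : Measure ℝ} [IsFiniteMeasure ν]
    (hν : ν (Set.Icc 0 1)ᶜ = 0) {f : ℝ → ℝ} (hf : Continuous f) : Integrable f ν := by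
  obtain ⟨C, hC⟩ := (isCompact_Icc (a := (0:ℝ)) (b := 1)).exists_bound_of_continuousOn
    hf.continuousOn
  refine Integrable.mono' (integrable_const C) hf.aestronglyMeasurable ?_
  have hae : ∀ᵐ x ∂ν, x ∈ Set.Icc (0:ℝ) 1 := by
    rw [ae_iff]
    convert hν using 2
    rfl
  filter_upwards [hae] with x hx using hC x hx

lemma ext_of_moments (μ1 μ2 : Measure ℝ) [IsProbabilityMeasure μ1] [IsProbabilityMeasure μ2]
    (h1 : μ1 (Set.Icc 0 1)ᶜ = 0) (h2 : μ2 (Set.Icc 0 1)ᶜ = 0)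
    (hmom : ∀ n : ℕ, ∫ x, x ^ n ∂μ1 = ∫ x, x ^ n ∂μ2) : μ1 = μ2 := by
  have hae1 : ∀ᵐ x ∂μ1, x ∈ Set.Icc (0:ℝ) 1 := by
    rw [ae_iff]; convert h1 using 2; rfl
  have hae2 : ∀ᵐ x ∂μ2, x ∈ Set.Icc (0:ℝ) 1 := by
    rw [ae_iff]; convert h2 using 2; rfl
  have hpoly : ∀ p : Polynomial ℝ, ∫ x, p.eval x ∂μ1 = ∫ x, p.eval x ∂μ2 := by
    intro p
    induction p using Polynomial.induction_on' with
    | add p q hp hq =>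
      have cp : Continuous fun x : ℝ => p.eval x := p.continuous
      have cq : Continuous fun x : ℝ => q.eval x := q.continuous
      simp only [Polynomial.eval_add]
      rw [integral_add (integrable_of_support_Icc h1 cp) (integrable_of_support_Icc h1 cq),
        integral_add (integrable_of_support_Icc h2 cp) (integrable_of_support_Icc h2 cq),
        hp, hq]
    | monomial n a =>
      simp only [Polynomial.eval_monomial]
      rw [integral_const_mul, integral_const_mul, hmom n]
  have hcont : ∀ f : ℝ → ℝ, Continuous f → ∫ x, f x ∂μ1 = ∫ x, f x ∂μ2 := by
    intro f hf
    have key : ∀ ε : ℝ, 0 < ε → |∫ x, f x ∂μ1 - ∫ x, f x ∂μ2| ≤ 2 * ε := by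
      intro ε hε
      obtain ⟨p, hp⟩ := exists_polynomial_near_of_continuousOn 0 1 f hf.continuousOn ε hε
      have hintf1 := integrable_of_support_Icc h1 hf
      have hintf2 := integrable_of_support_Icc h2 hf
      have hintp1 := integrable_of_support_Icc h1 (p.continuous)
      have hintp2 := integrable_of_support_Icc h2 (p.continuous)
      have bound : ∀ (ν : Measure ℝ), IsProbabilityMeasure ν → ν (Set.Icc 0 1)ᶜ = 0 →
          (∀ᵐ x ∂ν, x ∈ Set.Icc (0:ℝ) 1) → Integrable f ν → Integrable (fun x => p.eval x) ν →
          |∫ x, f x ∂ν - ∫ x, p.eval x ∂ν| ≤ ε := by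
        intro ν hprob hν hae hif hip
        rw [← integral_sub hif hip]
        have habs : |∫ x, (f x - p.eval x) ∂ν| ≤ ∫ x, |f x - p.eval x| ∂ν := by
          simpa [Real.norm_eq_abs] using
            norm_integral_le_integral_norm (μ := ν) (f := fun x => f x - p.eval x)
        refine habs.trans ?_
        have : ∫ x, |f x - p.eval x| ∂ν ≤ ∫ _x, ε ∂ν := by
          refine integral_mono_ae (hif.sub hip).abs (integrable_const ε) ?_
          filter_upwards [hae] with x hx
          rw [abs_sub_comm]
          exact (hp x hx).le
        simpa [measure_univ] using this
      have b1 := bound μ1 inferInstance h1 hae1 hintf1 hintp1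
      have b2 := bound μ2 inferInstance h2 hae2 hintf2 hintp2
      have hpp := hpoly p
      calc |∫ x, f x ∂μ1 - ∫ x, f x ∂μ2|
          = |(∫ x, f x ∂μ1 - ∫ x, p.eval x ∂μ1) - (∫ x, f x ∂μ2 - ∫ x, p.eval x ∂μ2)| := by
            rw [hpp]; ring_nf
        _ ≤ |∫ x, f x ∂μ1 - ∫ x, p.eval x ∂μ1| + |∫ x, f x ∂μ2 - ∫ x, p.eval x ∂μ2| :=
            abs_sub _ _
        _ ≤ 2 * ε := by linarith
    have : |∫ x, f x ∂μ1 - ∫ x, f x ∂μ2| ≤ 0 := by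
      by_contra hlt
      push_neg at hlt
      have := key (|∫ x, f x ∂μ1 - ∫ x, f x ∂μ2| / 4) (by linarith)
      linarith
    have := abs_nonneg (∫ x, f x ∂μ1 - ∫ x, f x ∂μ2)
    have heq : |∫ x, f x ∂μ1 - ∫ x, f x ∂μ2| = 0 := le_antisymm ‹_› ‹_›
    have := abs_eq_zero.mp heq
    linarith
  apply ext_of_forall_lintegral_eq_of_IsFiniteMeasure
  intro f
  have hfc : Continuous fun x => ((f x : ℝ≥0) : ℝ) := NNReal.continuous_coe.comp f.continuous
  rw [lintegral_coe_eq_integral _ (integrable_of_support_Icc h1 hfc),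
    lintegral_coe_eq_integral _ (integrable_of_support_Icc h2 hfc), hcont _ hfc]


section Indep
open Finset

lemma indep_integral_prod {Ω : Type*} [MeasurableSpace Ω] {μ : Measure Ω} [IsProbabilityMeasure μ]
    {K : ℕ} (Y : Fin K → Ω → ℝ) (h : iIndepFun Y μ)
    (hm : ∀ k, Measurable (Y k)) (s : Finset (Fin K)) :
    ∫ ω, ∏ k ∈ s, Y k ω ∂μ = ∏ k ∈ s, ∫ ω, Y k ω ∂μ := by
  classical
  induction s using Finset.induction_on with
  | empty => simp
  | @insert i s hi ih =>
    have hfun : (fun ω => ∏ k ∈ s, Y k ω) = ∏ j ∈ s, Y j :=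
      funext fun ω => (Finset.prod_apply ω s Y).symm
    have hip : IndepFun (Y i) (fun ω => ∏ k ∈ s, Y k ω) μ := by
      rw [hfun]
      exact (h.indepFun_finset_prod_of_notMem hm hi).symm
    have hpm : Measurable fun ω => ∏ k ∈ s, Y k ω :=
      Finset.measurable_prod s (fun k _ => hm k)
    have key := hip.integral_fun_mul_eq_mul_integral (hm i).aestronglyMeasurable hpm.aestronglyMeasurable
    simp_rw [Finset.prod_insert hi]
    rw [key, ih]

end Indep

/-- Let `X^(k)`, `k = 0, ..., K-1`, be independent with `X^(k) ∼ Beta(θ/K + k/K, β/K)`.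
Then the geometric mean `(∏ k, X^(k))^(1/K)` has a `Beta(θ, β)` distribution. -/
theorem geom_mean_beta
    {Ω : Type*} [MeasurableSpace Ω] (μ : Measure Ω) [IsProbabilityMeasure μ]
    (K : ℕ) (hK : 0 < K) (θ β : ℝ) (hθ : 0 < θ) (hβ : 0 < β)
    (X : Fin K → Ω → ℝ) (hmeas : ∀ k, Measurable (X k))
    (hindep : iIndepFun X μ)
    (hlaw : ∀ k : Fin K, Measure.map (X k) μ
      = betaMeasure' (θ / K + (k : ℕ) / K) (β / K)) :
    Measure.map (fun ω => (∏ k, X k ω) ^ ((K : ℝ)⁻¹)) μ = betaMeasure' θ β := by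
  have hK' : (0:ℝ) < K := by exact_mod_cast hK
  have hKne : (K:ℝ) ≠ 0 := hK'.ne'
  have hak : ∀ k : Fin K, 0 < θ / K + (k:ℕ) / K := fun k => by positivity
  have hb : 0 < β / K := by positivity
  have haek : ∀ k : Fin K, ∀ᵐ ω ∂μ, X k ω ∈ Set.Ioo (0:ℝ) 1 := by
    intro k
    have hmap : Measure.map (X k) μ (Set.Ioo 0 1)ᶜ = 0 := by
      rw [hlaw k]; exact betaMeasure_compl_Ioo _ _
    rw [Measure.map_apply (hmeas k) measurableSet_Ioo.compl] at hmap
    rw [ae_iff]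
    convert hmap using 2
    rfl
  have hae : ∀ᵐ ω ∂μ, ∀ k, X k ω ∈ Set.Ioo (0:ℝ) 1 := ae_all_iff.2 haek
  set g : Ω → ℝ := fun ω => (∏ k, X k ω) ^ ((K:ℝ)⁻¹) with hgdef
  have hgm : Measurable g := by
    have hp : Measurable fun ω => ∏ k, X k ω :=
      Finset.measurable_prod Finset.univ (fun k _ => hmeas k)
    fun_prop
  have hP1 : IsProbabilityMeasure (Measure.map g μ) := Measure.isProbabilityMeasure_map hgm.aemeasurable
  have hP2 : IsProbabilityMeasure (betaMeasure' θ β) := betaMeasure_isProbability hθ hβ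
  have hsupp : Measure.map g μ (Set.Icc 0 1)ᶜ = 0 := by
    rw [Measure.map_apply hgm measurableSet_Icc.compl]
    have hmem : ∀ᵐ ω ∂μ, g ω ∈ Set.Icc (0:ℝ) 1 := by
      filter_upwards [hae] with ω hω
      have hprodpos : 0 < ∏ k, X k ω := Finset.prod_pos (fun k _ => (hω k).1)
      have hprodle : ∏ k, X k ω ≤ 1 :=
        Finset.prod_le_one (fun k _ => (hω k).1.le) (fun k _ => (hω k).2.le)
      exact ⟨Real.rpow_nonneg hprodpos.le _,
        Real.rpow_le_one hprodpos.le hprodle (by positivity)⟩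
    rw [ae_iff] at hmem
    convert hmem using 2
    rfl
  have hmom : ∀ n : ℕ, ∫ x, x ^ n ∂(Measure.map g μ) = ∫ x, x ^ n ∂(betaMeasure' θ β) := by
    intro n
    set r : ℝ := (n:ℝ) / K with hr
    have hr0 : 0 ≤ r := by positivity
    rw [integral_map hgm.aemeasurable
      ((by fun_prop : Measurable fun x : ℝ => x ^ n).aestronglyMeasurable)]
    have step1 : ∫ ω, (g ω) ^ n ∂μ = ∫ ω, ∏ k, (X k ω) ^ r ∂μ := by
      refine integral_congr_ae ?_
      filter_upwards [hae] with ω hω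
      have hpos : (0:ℝ) ≤ ∏ k, X k ω := (Finset.prod_pos (fun k _ => (hω k).1)).le
      rw [hgdef]
      simp only []
      rw [← Real.rpow_natCast ((∏ k, X k ω) ^ ((K:ℝ)⁻¹)) n, ← Real.rpow_mul hpos,
        show (K:ℝ)⁻¹ * (n:ℕ) = r by rw [hr]; ring,
        ← Real.finset_prod_rpow Finset.univ _ (fun k _ => (hω k).1.le) r]
    rw [step1]
    have hY : iIndepFun (fun k => fun ω => (X k ω) ^ r) μ := by
      have hcomp := hindep.comp (fun _ => fun x : ℝ => x ^ r)
        (fun _ => by fun_prop)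
      exact hcomp
    have hYm : ∀ k, Measurable fun ω => (X k ω) ^ r := by
      intro k
      have := hmeas k
      fun_prop
    rw [indep_integral_prod _ hY hYm Finset.univ]
    have hfac : ∀ k : Fin K, ∫ ω, (X k ω) ^ r ∂μ
        = betaFun ((θ + (k:ℕ) + n) / K) (β / K) / betaFun ((θ + (k:ℕ)) / K) (β / K) := by
      intro k
      have hmapint : ∫ ω, (X k ω) ^ r ∂μ = ∫ x, x ^ r ∂(Measure.map (X k) μ) :=
        (integral_map (hmeas k).aemeasurable
          ((by fun_prop : Measurable fun x : ℝ => x ^ r).aestronglyMeasurable)).symm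
      rw [hmapint, hlaw k, betaMeasure_rpow (hak k) hb hr0]
      have e1 : θ / (K:ℝ) + ((k:ℕ):ℝ) / K + r = (θ + (k:ℕ) + n) / K := by
        rw [hr]; field_simp
      have e2 : θ / (K:ℝ) + ((k:ℕ):ℝ) / K = (θ + (k:ℕ)) / K := by field_simp
      rw [e1, e2]
    rw [Finset.prod_congr rfl (fun k _ => hfac k),
      Fin.prod_univ_eq_prod_range
        (fun j => betaFun ((θ + j + n) / K) (β / K) / betaFun ((θ + j) / K) (β / K)) K,
      moment_prod hθ hβ hK n, betaMeasure_pow_nat hθ hβ n]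
  exact ext_of_moments _ _ hsupp (betaMeasure_compl_Icc θ β) hmom
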